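/- arXiv:0710.3250 — 2 statements merged into one kernel-verified Lean document; each statement's English description precedes it below -/
import Mathlib

section
/- Let K be a field and q ∈ K with q ≠ 0 and {n}_q ≠ 0 for every nonzero integer n. Then the representation of the q-deformed Heisenberg algebra H_q on the space L of formal Laurent series, given by the unital K-algebra homomorphism H_q → End_K(L) sending A to D_q and B to M, is faithful (injective). -/
noncomputable section

open Classical in
/-- The `q`-integer `{n}_q = (qⁿ − 1)/(q − 1)` for `q ≠ 1`, and `{n}_q = n·1_K` for `q = 1`. -/
def qInt (K : Type*) [Field K] (q : K) (n : ℤ) : K :=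
  if q = 1 then (n : K) else (q ^ n - 1) / (q - 1)

/-- The defining relation `AB = q·BA + 1` of the `q`-deformed Heisenberg algebra,
imposed on the free algebra on two generators. -/
inductive qHeisRel (K : Type*) [Field K] (q : K) :
    FreeAlgebra K (Fin 2) → FreeAlgebra K (Fin 2) → Prop
  | rel : qHeisRel K q (FreeAlgebra.ι K 0 * FreeAlgebra.ι K 1)
      (q • (FreeAlgebra.ι K 1 * FreeAlgebra.ι K 0) + 1)

/-- The `q`-deformed Heisenberg algebra `H_q = K⟨A,B⟩/⟨AB − qBA − 1⟩`. -/
abbrev qHeis (K : Type*) [Field K] (q : K) : Type _ := RingQuot (qHeisRel K q)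

/-- The generator `A` of `H_q`. -/
def qA (K : Type*) [Field K] (q : K) : qHeis K q :=
  RingQuot.mkAlgHom K (qHeisRel K q) (FreeAlgebra.ι K 0)

/-- The generator `B` of `H_q`. -/
def qB (K : Type*) [Field K] (q : K) : qHeis K q :=
  RingQuot.mkAlgHom K (qHeisRel K q) (FreeAlgebra.ι K 1)
/-- Multiplication by `t` on the space `L` of formal Laurent series `Σ aₙ tⁿ`,
realized as the space of functions `ℤ → K`: `(M f)(n) = f(n−1)`. -/
def Mop (K : Type*) [Field K] : Module.End K (ℤ → K) where
  toFun f := fun n => f (n - 1)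
  map_add' _ _ := rfl
  map_smul' _ _ := rfl

/-- The `q`-difference operator `D_q` on Laurent series: `(D_q f)(n) = {n+1}_q · f(n+1)`. -/
def Dq (K : Type*) [Field K] (q : K) : Module.End K (ℤ → K) where
  toFun f := fun n => qInt K q (n + 1) * f (n + 1)
  map_add' f g := by funext n; simp [mul_add]
  map_smul' c f := by funext n; simp [Pi.smul_apply, smul_eq_mul]; ring

namespace QHaux

variable {K : Type*} [Field K] (q : K)

lemma qInt_zero : qInt K q 0 = 0 := by
  unfold qInt; split_ifs <;> simp

lemma qInt_add_one (hq : q ≠ 0) (n : ℤ) : qInt K q (n + 1) = q * qInt K q n + 1 := by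
  unfold qInt; split_ifs with h
  · subst h; push_cast; ring
  · have h1 : q - 1 ≠ 0 := sub_ne_zero.mpr h
    field_simp
    rw [zpow_add_one₀ hq]
    ring

lemma qH_rel : qA K q * qB K q = q • (qB K q * qA K q) + 1 := by
  have := RingQuot.mkAlgHom_rel K (qHeisRel.rel (K := K) (q := q))
  simpa [qA, qB, map_mul, map_add, map_smul, map_one] using this

lemma A_mul_B_pow_succ (hq : q ≠ 0) (i : ℕ) :
    qA K q * qB K q ^ (i + 1) =
      q ^ (i + 1) • (qB K q ^ (i + 1) * qA K q) + qInt K q (i + 1) • qB K q ^ i := by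
  induction i with
  | zero =>
    have h1 : qInt K q ((0:ℤ) + 1) = 1 := by
      rw [qInt_add_one q hq, qInt_zero]; ring
    norm_num at h1
    simp [qH_rel, h1]
  | succ i ih =>
    have h1 : qA K q * qB K q ^ (i + 1 + 1) = (qA K q * qB K q) * qB K q ^ (i + 1) := by
      rw [pow_succ', mul_assoc]
    have h2 : qInt K q ((i : ℤ) + 1 + 1) = q * qInt K q ((i : ℤ) + 1) + 1 :=
      qInt_add_one q hq _
    rw [h1, qH_rel, add_mul, one_mul, smul_mul_assoc, mul_assoc, ih]
    have h3 : qB K q * (qB K q ^ (i + 1) * qA K q) = qB K q ^ (i + 1 + 1) * qA K q := by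
      rw [← mul_assoc, ← pow_succ']
    have h4 : qB K q * qB K q ^ i = qB K q ^ (i + 1) := (pow_succ' _ _).symm
    rw [mul_add, mul_smul_comm, mul_smul_comm, h3, h4]
    push_cast
    rw [h2]
    module

lemma A_mul_B_pow (hq : q ≠ 0) (i : ℕ) :
    qA K q * qB K q ^ i =
      q ^ i • (qB K q ^ i * qA K q) + qInt K q i • qB K q ^ (i - 1) := by
  cases i with
  | zero => simp [qInt_zero]
  | succ i => exact A_mul_B_pow_succ q hq i

def Sp (K : Type*) [Field K] (q : K) : Submodule K (qHeis K q) :=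
  Submodule.span K (Set.range fun p : ℕ × ℕ => qB K q ^ p.1 * qA K q ^ p.2)

lemma gen_mem_Sp (i j : ℕ) : qB K q ^ i * qA K q ^ j ∈ Sp K q :=
  Submodule.subset_span ⟨(i, j), rfl⟩

lemma B_mul_mem_Sp {s : qHeis K q} (hs : s ∈ Sp K q) : qB K q * s ∈ Sp K q := by
  induction hs using Submodule.span_induction with
  | mem x hx =>
    obtain ⟨⟨i, j⟩, rfl⟩ := hx
    have : qB K q * (qB K q ^ i * qA K q ^ j) = qB K q ^ (i + 1) * qA K q ^ j := by
      rw [← mul_assoc, ← pow_succ']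
    rw [this]; exact gen_mem_Sp q _ _
  | zero => simp
  | add x y _ _ hx hy => rw [mul_add]; exact Submodule.add_mem _ hx hy
  | smul a x _ hx => rw [mul_smul_comm]; exact Submodule.smul_mem _ _ hx

lemma A_mul_mem_Sp (hq : q ≠ 0) {s : qHeis K q} (hs : s ∈ Sp K q) :
    qA K q * s ∈ Sp K q := by
  induction hs using Submodule.span_induction with
  | mem x hx =>
    obtain ⟨⟨i, j⟩, rfl⟩ := hx
    have : qA K q * (qB K q ^ i * qA K q ^ j) =
        q ^ i • (qB K q ^ i * qA K q ^ (j + 1)) +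
          qInt K q i • (qB K q ^ (i - 1) * qA K q ^ j) := by
      rw [← mul_assoc, A_mul_B_pow q hq, add_mul, smul_mul_assoc, smul_mul_assoc,
        mul_assoc, ← pow_succ']
    rw [this]
    exact Submodule.add_mem _ (Submodule.smul_mem _ _ (gen_mem_Sp q _ _))
      (Submodule.smul_mem _ _ (gen_mem_Sp q _ _))
  | zero => simp
  | add x y _ _ hx hy => rw [mul_add]; exact Submodule.add_mem _ hx hy
  | smul a x _ hx => rw [mul_smul_comm]; exact Submodule.smul_mem _ _ hx

lemma mem_Sp (hq : q ≠ 0) (x : qHeis K q) : x ∈ Sp K q := by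
  obtain ⟨y, rfl⟩ := RingQuot.mkAlgHom_surjective K (qHeisRel K q) x
  have key : ∀ y : FreeAlgebra K (Fin 2), ∀ s ∈ Sp K q,
      RingQuot.mkAlgHom K (qHeisRel K q) y * s ∈ Sp K q := by
    intro y
    induction y using FreeAlgebra.induction with
    | grade0 r =>
      intro s hs
      rw [AlgHom.commutes, Algebra.algebraMap_eq_smul_one, smul_mul_assoc, one_mul]
      exact Submodule.smul_mem _ _ hs
    | grade1 x =>
      fin_cases x
      · intro s hs; exact A_mul_mem_Sp q hq hs
      · intro s hs; exact B_mul_mem_Sp q hs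
    | mul a b ha hb =>
      intro s hs
      rw [map_mul, mul_assoc]
      exact ha _ (hb _ hs)
    | add a b ha hb =>
      intro s hs
      rw [map_add, add_mul]
      exact Submodule.add_mem _ (ha _ hs) (hb _ hs)
  have h1 : (1 : qHeis K q) ∈ Sp K q := by
    simpa using gen_mem_Sp q 0 0
  simpa using key y 1 h1

lemma Dq_apply (f : ℤ → K) (n : ℤ) : Dq K q f n = qInt K q (n + 1) * f (n + 1) := rfl

lemma Mop_apply (f : ℤ → K) (n : ℤ) : Mop K f n = f (n - 1) := rfl

lemma Dq_pow_apply (j : ℕ) (f : ℤ → K) (n : ℤ) :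
    ((Dq K q ^ j) f) n = (∏ k ∈ Finset.range j, qInt K q (n + k + 1)) * f (n + j) := by
  induction j generalizing f with
  | zero => simp
  | succ j ih =>
    rw [pow_succ, Module.End.mul_apply, ih (Dq K q f), Dq_apply, Finset.prod_range_succ]
    push_cast
    rw [mul_assoc]
    simp [add_assoc]

lemma Mop_pow_apply (i : ℕ) (f : ℤ → K) (n : ℤ) : ((Mop K ^ i) f) n = f (n - i) := by
  induction i generalizing f with
  | zero => simp
  | succ i ih =>
    rw [pow_succ, Module.End.mul_apply, ih (Mop K f), Mop_apply]
    congr 1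
    push_cast
    ring

lemma MopDq_apply (i j : ℕ) (f : ℤ → K) (n : ℤ) :
    ((Mop K ^ i * Dq K q ^ j) f) n =
      (∏ k ∈ Finset.range j, qInt K q (n - i + k + 1)) * f (n - i + j) := by
  rw [Module.End.mul_apply, Mop_pow_apply, Dq_pow_apply]

open Polynomial in
lemma coeff_extract (G : ℕ → K[X]) (hdeg : ∀ j, (G j).degree = (j : ℕ)) :
    ∀ (N : ℕ) (a : ℕ → K), (∑ j ∈ Finset.range N, C (a j) * G j) = 0 →
      ∀ j < N, a j = 0 := by
  intro N
  induction N with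
  | zero => intro a _ j hj; omega
  | succ N ih =>
    intro a hsum
    have hGN : (G N).natDegree = N := natDegree_eq_of_degree_eq_some (hdeg N)
    have hGne : G N ≠ 0 := by
      intro h
      have := hdeg N
      rw [h, degree_zero] at this
      exact absurd this (by simp)
    have haN : a N = 0 := by
      have hco := congrArg (fun p => Polynomial.coeff p N) hsum
      simp only [finset_sum_coeff, coeff_C_mul, coeff_zero] at hco
      rw [Finset.sum_range_succ] at hco
      have hz : ∀ j ∈ Finset.range N, a j * (G j).coeff N = 0 := by
        intro j hj
        rw [coeff_eq_zero_of_degree_lt, mul_zero]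
        rw [hdeg j]
        exact_mod_cast Finset.mem_range.1 hj
      rw [Finset.sum_eq_zero hz, zero_add] at hco
      have hlc : (G N).coeff N ≠ 0 := by
        have : (G N).coeff N = (G N).leadingCoeff := by rw [leadingCoeff, hGN]
        rw [this]
        exact mt leadingCoeff_eq_zero.1 hGne
      exact (mul_eq_zero.1 hco).resolve_right hlc
    have hsum' : (∑ j ∈ Finset.range N, C (a j) * G j) = 0 := by
      rw [Finset.sum_range_succ, haN, map_zero, zero_mul, add_zero] at hsum
      exact hsum
    intro j hj
    rcases Nat.lt_succ_iff_lt_or_eq.1 hj with h | h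
    · exact ih a hsum' j h
    · rw [h]; exact haN

open Polynomial in
lemma poly_key (G : ℕ → K[X]) (hdeg : ∀ j, (G j).degree = (j : ℕ))
    (u : ℤ → K) (hu : Set.InjOn u (Set.Iio 0)) (N : ℕ) (a : ℕ → K)
    (h : ∀ m : ℤ, m < 0 → (∑ j ∈ Finset.range N, a j * (G j).eval (u m)) = 0) :
    ∀ j < N, a j = 0 := by
  have hP : (∑ j ∈ Finset.range N, C (a j) * G j) = 0 := by
    by_contra hne
    have hfin : {x | ((∑ j ∈ Finset.range N, C (a j) * G j)).IsRoot x}.Finite :=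
      Polynomial.finite_setOf_isRoot hne
    have hsub : u '' Set.Iio 0 ⊆ {x | ((∑ j ∈ Finset.range N, C (a j) * G j)).IsRoot x} := by
      rintro _ ⟨m, hm, rfl⟩
      simp only [Set.mem_setOf_eq, IsRoot, eval_finset_sum, eval_mul, eval_C]
      exact h m hm
    exact ((Set.Iio_infinite 0).image hu).mono hsub hfin
  exact coeff_extract G hdeg N a hP

open Polynomial in
lemma exists_Gu (hq : q ≠ 0) (hfree : ∀ n : ℤ, n ≠ 0 → qInt K q n ≠ 0) :
    ∃ (G : ℕ → K[X]) (u : ℤ → K), (∀ j, (G j).degree = (j : ℕ)) ∧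
      Set.InjOn u (Set.Iio 0) ∧
      ∀ (m : ℤ) (j : ℕ), (G j).eval (u m) =
        ∏ k ∈ Finset.range j, qInt K q (m - j + k + 1) := by
  by_cases hq1 : q = 1
  · subst hq1
    refine ⟨fun j => ∏ k ∈ Finset.range j, (X + C (((k : ℤ) + 1 - j : ℤ) : K)),
      fun m => (m : K), ?_, ?_, ?_⟩
    · intro j
      rw [degree_prod]
      simp only [degree_X_add_C]
      simp
    · intro m1 _ m2 _ h
      by_contra hne
      have h' : (m1 : K) = (m2 : K) := h
      apply hfree (m1 - m2) (sub_ne_zero.2 hne)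
      rw [qInt, if_pos rfl]
      push_cast
      rw [h']
      ring
    · intro m j
      rw [eval_prod]
      refine Finset.prod_congr rfl fun k _ => ?_
      rw [eval_add, eval_X, eval_C, qInt, if_pos rfl]
      push_cast
      ring
  · refine ⟨fun j => ∏ k ∈ Finset.range j,
        (C (q ^ ((k : ℤ) + 1 - j) / (q - 1)) * X + C (-(1 / (q - 1)))),
      fun m => q ^ m, ?_, ?_, ?_⟩
    have hq1' : q - 1 ≠ 0 := sub_ne_zero.2 hq1
    · intro j
      rw [degree_prod]
      have : ∀ k ∈ Finset.range j,
          (C (q ^ ((k : ℤ) + 1 - j) / (q - 1)) * X + C (-(1 / (q - 1)))).degree = 1 := by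
        intro k _
        exact degree_linear (div_ne_zero (zpow_ne_zero _ hq) hq1')
      rw [Finset.sum_congr rfl this]
      simp
    · intro m1 _ m2 _ h
      by_contra hne
      have h' : q ^ m1 = q ^ m2 := h
      apply hfree (m1 - m2) (sub_ne_zero.2 hne)
      rw [qInt, if_neg hq1, zpow_sub₀ hq, h', div_self (zpow_ne_zero _ hq)]
      simp
    · intro m j
      rw [eval_prod]
      refine Finset.prod_congr rfl fun k _ => ?_
      rw [eval_add, eval_mul, eval_X, eval_C, eval_C, qInt, if_neg hq1]
      rw [div_mul_eq_mul_div, ← zpow_add₀ hq]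
      have harg : (k : ℤ) + 1 - j + m = m - j + k + 1 := by ring
      rw [harg]
      ring

end QHaux

/-- If `q ≠ 0` and `{n}_q ≠ 0` for every nonzero integer `n`, then the representation of
the `q`-deformed Heisenberg algebra `H_q` on the space `L` of formal Laurent series,
sending `A ↦ D_q` and `B ↦ M`, is faithful (injective). -/
theorem qHeis_laurent_representation_faithful
    {K : Type*} [Field K] (q : K) (hq : q ≠ 0)
    (hfree : ∀ n : ℤ, n ≠ 0 → qInt K q n ≠ 0) :
    ∀ φ : qHeis K q →ₐ[K] Module.End K (ℤ → K),
      φ (qA K q) = Dq K q → φ (qB K q) = Mop K → Function.Injective φ := by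
  intro φ hA hB
  rw [injective_iff_map_eq_zero]
  intro x hx0
  obtain ⟨c, hc⟩ := Finsupp.mem_span_range_iff_exists_finsupp.1 (QHaux.mem_Sp q hq x)
  have hφ : (c.sum fun p a => a • (Mop K ^ p.1 * Dq K q ^ p.2)) = 0 := by
    rw [← hx0, ← hc, map_finsuppSum]
    refine Finsupp.sum_congr fun p _ => ?_
    rw [map_smul, map_mul, map_pow, map_pow, hA, hB]
  -- delta functions
  set e : ℤ → (ℤ → K) := fun m t => if t = m then 1 else 0 with he
  have heval : ∀ m n : ℤ,
      (∑ p ∈ c.support, c p * (((Mop K ^ p.1 * Dq K q ^ p.2)) (e m) n)) = 0 := by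
    intro m n
    have h1 : ((c.sum fun p a => a • (Mop K ^ p.1 * Dq K q ^ p.2)) (e m)) n = 0 := by
      rw [hφ]; rfl
    rw [Finsupp.sum] at h1
    rw [LinearMap.sum_apply] at h1
    rw [Finset.sum_apply] at h1
    simpa only [LinearMap.smul_apply, Pi.smul_apply, smul_eq_mul] using h1
  set N : ℕ := 1 + c.support.sup (fun p => max p.1 p.2) with hN
  have hpN : ∀ p ∈ c.support, p.1 < N ∧ p.2 < N := by
    intro p hp
    have h : max p.1 p.2 ≤ c.support.sup (fun p : ℕ × ℕ => max p.1 p.2) :=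
      Finset.le_sup (f := fun p : ℕ × ℕ => max p.1 p.2) hp
    have h1 : p.1 ≤ max p.1 p.2 := le_max_left _ _
    have h2 : p.2 ≤ max p.1 p.2 := le_max_right _ _
    omega
  obtain ⟨G, u, hdeg, hu, hGe⟩ := QHaux.exists_Gu q hq hfree
  have hall : ∀ p0 : ℕ × ℕ, c p0 = 0 := by
    intro p0
    by_cases hp0 : p0 ∈ c.support
    swap
    · exact Finsupp.notMem_support_iff.1 hp0
    set d : ℤ := (p0.1 : ℤ) - p0.2 with hd
    set a : ℕ → K := fun j =>
      ∑ i ∈ Finset.range N, if (i : ℤ) - (j : ℤ) = d then c (i, j) else 0 with ha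
    have key : ∀ m : ℤ,
        (∑ j ∈ Finset.range N,
          a j * (∏ k ∈ Finset.range j, qInt K q (m - j + k + 1))) = 0 := by
      intro m
      have h0 := heval m (m + d)
      have hsub : c.support ⊆ Finset.range N ×ˢ Finset.range N := by
        intro p hp
        rcases hpN p hp with ⟨h1, h2⟩
        exact Finset.mem_product.2 ⟨Finset.mem_range.2 h1, Finset.mem_range.2 h2⟩
      rw [Finset.sum_subset hsub (fun p _ hp => by
        rw [Finsupp.notMem_support_iff.1 hp, zero_mul])] at h0
      rw [Finset.sum_product] at h0
      rw [Finset.sum_comm] at h0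
      rw [← h0]
      refine Finset.sum_congr rfl fun j hj => ?_
      rw [ha]
      rw [Finset.sum_mul]
      refine Finset.sum_congr rfl fun i hi => ?_
      rw [QHaux.MopDq_apply]
      by_cases hcond : (i : ℤ) - (j : ℤ) = d
      · rw [if_pos hcond]
        have harg1 : m + d - (i : ℤ) = m - j := by omega
        have harg2 : m + d - (i : ℤ) + (j : ℕ) = m := by omega
        simp only [harg1, harg2, he]
        simp
      · rw [if_neg hcond, zero_mul]
        have harg2 : m + d - (i : ℤ) + (j : ℕ) ≠ m := by omega
        simp only [he]
        simp [harg2]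
    have hkey' : ∀ m : ℤ, m < 0 →
        (∑ j ∈ Finset.range N, a j * (G j).eval (u m)) = 0 := by
      intro m _
      rw [Finset.sum_congr rfl fun j _ => by rw [hGe m j]]
      exact key m
    have haz := QHaux.poly_key G hdeg u hu N a hkey' p0.2 (hpN p0 hp0).2
    have heq : a p0.2 = c p0 := by
      show (∑ i ∈ Finset.range N,
        if (i : ℤ) - (p0.2 : ℤ) = d then c (i, p0.2) else 0) = c p0
      rw [Finset.sum_eq_single_of_mem p0.1 (Finset.mem_range.2 (hpN p0 hp0).1)]
      · rw [if_pos (by omega)]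
      · intro i _ hne
        rw [if_neg (by omega)]
    rw [← heq]
    exact haz
  have hc0 : c = 0 := Finsupp.ext hall
  rw [← hc, hc0, Finsupp.sum_zero_index]
end
end

section
/- Let K be a field and q ∈ K with q ≠ 0. The following three conditions are equivalent: (1) for every integer n, {n}_q = 0 if and only if n = 0; (2) for all integers n₁, n₂, if {n₁}_q = {n₂}_q then n₁ = n₂; (3) if char K = 0 then q is not a root of unity other than 1 (i.e., for every positive integer n, q^n = 1 implies q = 1), and if char K ≠ 0 then q is not a root of unity at all (i.e., q^n ≠ 1 for every positive integer n). -/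
noncomputable section

/-- For `q ≠ 0` the following are equivalent: (1) `{n}_q = 0` iff `n = 0`;
(2) the map `n ↦ {n}_q` is injective on `ℤ`; (3) if `char K = 0` then `q` is not a root of
unity other than `1`, and if `char K ≠ 0` then `q` is not a root of unity at all. -/
theorem qInt_nonzero_iff_injective_iff_not_root_of_unity
    {K : Type*} [Field K] (q : K) (hq : q ≠ 0) :
    ((∀ n : ℤ, qInt K q n = 0 ↔ n = 0) ↔
      ∀ n₁ n₂ : ℤ, qInt K q n₁ = qInt K q n₂ → n₁ = n₂) ∧
    ((∀ n : ℤ, qInt K q n = 0 ↔ n = 0) ↔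
      if ringChar K = 0 then ∀ n : ℕ, 0 < n → q ^ n = 1 → q = 1
      else ∀ n : ℕ, 0 < n → q ^ n ≠ 1) := by
  have h0 : qInt K q 0 = 0 := by simp [qInt]
  have hzero : q ≠ 1 → ∀ n : ℤ, (qInt K q n = 0 ↔ q ^ n = 1) := by
    intro h1 n
    simp only [qInt, if_neg h1]
    rw [div_eq_zero_iff, sub_eq_zero, sub_eq_zero]
    exact or_iff_left h1
  have habs : ∀ n : ℤ, q ^ n = 1 ↔ q ^ n.natAbs = 1 := by
    intro n
    rcases Int.natAbs_eq n with h | h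
    · nth_rewrite 1 [h]
      rw [zpow_natCast]
    · nth_rewrite 1 [h]
      rw [zpow_neg, inv_eq_one, zpow_natCast]
  -- for q ≠ 1, condition (1) ↔ no positive roots of unity
  have key : q ≠ 1 → ((∀ n : ℤ, qInt K q n = 0 ↔ n = 0) ↔
      ∀ n : ℕ, 0 < n → q ^ n ≠ 1) := by
    intro h1
    constructor
    · intro hP n hn hqn
      have : ((n : ℤ)) = 0 := by
        rw [← hP, hzero h1, zpow_natCast]; exact hqn
      omega
    · intro hR n
      rw [hzero h1, habs]
      constructor
      · intro h
        by_contra hne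
        exact hR n.natAbs (by omega) h
      · intro h; simp [h]
  -- for q = 1, condition (1) ↔ char K = 0
  have key1 : q = 1 → ((∀ n : ℤ, qInt K q n = 0 ↔ n = 0) ↔ ringChar K = 0) := by
    intro h1
    simp only [qInt, if_pos h1]
    constructor
    · intro hP
      by_contra hc
      have : ((ringChar K : ℤ) : K) = 0 := by
        push_cast
        exact CharP.cast_eq_zero K (ringChar K)
      have := (hP (ringChar K : ℤ)).1 this
      omega
    · intro hc n
      have : CharZero K := by
        have := ringChar.charP K
        rw [hc] at this
        exact CharP.charP_to_charZero K
      simp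
  constructor
  · constructor
    · intro hP n₁ n₂ hEq
      by_cases h1 : q = 1
      · have : ((n₁ : K)) = (n₂ : K) := by
          simpa [qInt, h1] using hEq
        have hsub : qInt K q (n₁ - n₂) = 0 := by
          simp [qInt, h1, sub_eq_zero, this]
        have := (hP _).1 hsub
        omega
      · have hne : q - 1 ≠ 0 := sub_ne_zero.2 h1
        have hpow : q ^ n₁ = q ^ n₂ := by
          simp only [qInt, if_neg h1] at hEq
          field_simp at hEq
          exact sub_left_injective hEq
        have hsub : qInt K q (n₁ - n₂) = 0 := by
          rw [hzero h1, zpow_sub₀ hq, hpow, div_self (zpow_ne_zero _ hq)]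
        have := (hP _).1 hsub
        omega
    · intro hInj n
      constructor
      · intro h
        exact hInj n 0 (by rw [h0, h])
      · rintro rfl; exact h0
  · by_cases h1 : q = 1
    · rw [key1 h1]
      by_cases hc : ringChar K = 0
      · simp [hc, h1]
      · rw [if_neg hc]
        constructor
        · intro h; exact absurd h hc
        · intro h
          exact absurd (by simp [h1] : q ^ 1 = 1) (h 1 one_pos)
    · rw [key h1]
      by_cases hc : ringChar K = 0
      · simp only [hc, if_pos rfl]
        constructor
        · intro h n hn hqn
          exact absurd hqn (h n hn)
        · intro h n hn hqn
          exact h1 (h n hn hqn)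
      · simp [hc]
end
end
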